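/- Suppose M, N ∈ ℤ with M + 1 ≤ N, the map f_i : A_{i+1} → A_i is surjective for every i ≥ N, and f_j : A_{j+1} → A_j is injective for every j ≤ M. Then the quotient κ = L/K is isomorphic as an F-vector space to the image of the composite F_{M+1,N} = f_{M+1} ∘ ⋯ ∘ f_{N-1} : A_N → A_{M+1} (and to A_N itself when M + 1 = N). (This is precisely the finite computation the paper carries out to determine its invariant from finitely many Khovanov homology groups, e.g. for torus knots.) -/

import Mathlib

/-- The inverse limit of a `ℤ`-indexed inverse system of `F`-vector spaces,
realised as the subspace of the product consisting of compatible sequences. -/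
def invLim (F : Type*) [Field F] (A : ℤ → Type*) [∀ j, AddCommGroup (A j)]
    [∀ j, Module F (A j)] (f : ∀ j : ℤ, A (j + 1) →ₗ[F] A j) :
    Submodule F (∀ j, A j) where
  carrier := {x | ∀ j, f j (x (j + 1)) = x j}
  add_mem' := by
    intro a b ha hb j
    simp only [Pi.add_apply, map_add, ha j, hb j]
  zero_mem' := by
    intro j
    simp
  smul_mem' := by
    intro c x hx j
    simp only [Pi.smul_apply, map_smul, hx j]

/-- The `j`-th coordinate projection out of the inverse limit. -/
def invLimProj (F : Type*) [Field F] (A : ℤ → Type*) [∀ j, AddCommGroup (A j)]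
    [∀ j, Module F (A j)] (f : ∀ j : ℤ, A (j + 1) →ₗ[F] A j) (j : ℤ) :
    invLim F A f →ₗ[F] A j :=
  (LinearMap.proj j).comp (invLim F A f).subtype

/-- The subspace of the inverse limit consisting of the sequences that vanish
for all sufficiently negative indices. -/
def vanishSub (F : Type*) [Field F] (A : ℤ → Type*) [∀ j, AddCommGroup (A j)]
    [∀ j, Module F (A j)] (f : ∀ j : ℤ, A (j + 1) →ₗ[F] A j) :
    Submodule F (invLim F A f) where
  carrier := {x | ∃ N : ℤ, ∀ j ≤ N, (x : ∀ k, A k) j = 0}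
  add_mem' := by
    rintro a b ⟨N, hN⟩ ⟨M, hM⟩
    refine ⟨min N M, fun j hj => ?_⟩
    have h1 := hN j (hj.trans (min_le_left N M))
    have h2 := hM j (hj.trans (min_le_right N M))
    show (a : ∀ k, A k) j + (b : ∀ k, A k) j = 0
    rw [h1, h2, add_zero]
  zero_mem' := ⟨0, fun j _ => rfl⟩
  smul_mem' := by
    rintro c a ⟨N, hN⟩
    refine ⟨N, fun j hj => ?_⟩
    show c • (a : ∀ k, A k) j = 0
    rw [hN j hj, smul_zero]


section Aux

variable {F : Type*} [Field F] {A : ℤ → Type*} [∀ j, AddCommGroup (A j)]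
    [∀ j, Module F (A j)]

lemma Fc_top (f : ∀ j : ℤ, A (j + 1) →ₗ[F] A j)
    (Fc : ∀ j i : ℤ, j ≤ i → (A i →ₗ[F] A j))
    (hFid : ∀ j : ℤ, Fc j j le_rfl = LinearMap.id)
    (hFsucc : ∀ (j i : ℤ) (h : j ≤ i),
      Fc j (i + 1) (h.trans (Int.le_add_one (le_refl i))) = (Fc j i h).comp (f i))
    (j i : ℤ) (h : j + 1 ≤ i) (h' : j ≤ i) :
    Fc j i h' = (f j).comp (Fc (j + 1) i h) := by
  refine Int.le_induction (motive := fun i _ => ∀ (h2 : j + 1 ≤ i) (h3 : j ≤ i),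
      Fc j i h3 = (f j).comp (Fc (j + 1) i h2)) ?_ ?_ i h h h'
  · intro h2 h3
    calc Fc j (j + 1) h3 = (Fc j j le_rfl).comp (f j) := hFsucc j j le_rfl
      _ = (f j).comp (Fc (j + 1) (j + 1) le_rfl) := by
          rw [hFid j, hFid (j + 1)]; ext v; simp
  · intro n hn ih h2 h3
    calc Fc j (n + 1) h3 = (Fc j n (by omega)).comp (f n) := hFsucc j n (by omega)
      _ = ((f j).comp (Fc (j + 1) n hn)).comp (f n) := by rw [ih hn (by omega)]
      _ = (f j).comp (Fc (j + 1) (n + 1) h2) := by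
          rw [hFsucc (j + 1) n hn, LinearMap.comp_assoc]

lemma Fc_apply (f : ∀ j : ℤ, A (j + 1) →ₗ[F] A j)
    (Fc : ∀ j i : ℤ, j ≤ i → (A i →ₗ[F] A j))
    (hFid : ∀ j : ℤ, Fc j j le_rfl = LinearMap.id)
    (hFsucc : ∀ (j i : ℤ) (h : j ≤ i),
      Fc j (i + 1) (h.trans (Int.le_add_one (le_refl i))) = (Fc j i h).comp (f i))
    (x : ∀ k, A k) (hx : ∀ k, f k (x (k + 1)) = x k)
    (j i : ℤ) (h : j ≤ i) : Fc j i h (x i) = x j := by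
  refine Int.le_induction (motive := fun i _ => ∀ (h2 : j ≤ i), Fc j i h2 (x i) = x j)
      ?_ ?_ i h h
  · intro h2; rw [hFid j]; rfl
  · intro n hn ih h2
    calc Fc j (n + 1) h2 (x (n + 1))
        = (Fc j n hn) (f n (x (n + 1))) := DFunLike.congr_fun (hFsucc j n hn) (x (n + 1))
      _ = Fc j n hn (x n) := by rw [hx n]
      _ = x j := ih hn

lemma Fc_inj (f : ∀ j : ℤ, A (j + 1) →ₗ[F] A j)
    (Fc : ∀ j i : ℤ, j ≤ i → (A i →ₗ[F] A j))
    (hFid : ∀ j : ℤ, Fc j j le_rfl = LinearMap.id)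
    (hFsucc : ∀ (j i : ℤ) (h : j ≤ i),
      Fc j (i + 1) (h.trans (Int.le_add_one (le_refl i))) = (Fc j i h).comp (f i))
    (M : ℤ) (hinj : ∀ j ≤ M, Function.Injective (f j))
    (j i : ℤ) (h : j ≤ i) (hi : i ≤ M + 1) : Function.Injective (Fc j i h) := by
  refine Int.le_induction (motive := fun i _ => ∀ (h2 : j ≤ i), i ≤ M + 1 →
      Function.Injective (Fc j i h2)) ?_ ?_ i h h hi
  · intro h2 _; have e := hFid j; rw [e]; exact fun a b hab => hab
  · intro n hn ih h2 hn1
    intro a b hab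
    have e := hFsucc j n hn
    have hab' : Fc j n hn (f n a) = Fc j n hn (f n b) := by
      have h1 := DFunLike.congr_fun e a
      have h2 := DFunLike.congr_fun e b
      simp only [LinearMap.comp_apply] at h1 h2
      rw [← h1, ← h2]; exact hab
    exact hinj n (by omega) (ih hn (by omega) hab')

end Aux

section Lift

variable {F : Type*} [Field F] {A : ℤ → Type*} [∀ j, AddCommGroup (A j)]
    [∀ j, Module F (A j)]

noncomputable def liftSeq (f : ∀ j : ℤ, A (j + 1) →ₗ[F] A j) (N : ℤ)
    (hsurj : ∀ i, N ≤ i → Function.Surjective (f i)) (a : A N) :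
    ℕ → Σ' i : ℤ, Σ' _ : N ≤ i, A i
  | 0 => ⟨N, le_rfl, a⟩
  | n + 1 =>
    let p := liftSeq f N hsurj a n
    ⟨p.1 + 1, p.2.1.trans (by omega), Function.surjInv (hsurj p.1 p.2.1) p.2.2⟩

lemma liftSeq_fst (f : ∀ j : ℤ, A (j + 1) →ₗ[F] A j) (N : ℤ)
    (hsurj : ∀ i, N ≤ i → Function.Surjective (f i)) (a : A N) (n : ℕ) :
    (liftSeq f N hsurj a n).1 = N + n := by
  induction n with
  | zero => simp [liftSeq]
  | succ n ih => simp only [liftSeq, ih]; push_cast; ring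

lemma liftSeq_spec (f : ∀ j : ℤ, A (j + 1) →ₗ[F] A j) (N : ℤ)
    (hsurj : ∀ i, N ≤ i → Function.Surjective (f i)) (a : A N) (n : ℕ) :
    f (liftSeq f N hsurj a n).1 (liftSeq f N hsurj a (n + 1)).2.2
      = (liftSeq f N hsurj a n).2.2 := by
  show f (liftSeq f N hsurj a n).1
      (Function.surjInv (hsurj (liftSeq f N hsurj a n).1 (liftSeq f N hsurj a n).2.1)
        (liftSeq f N hsurj a n).2.2) = _
  exact Function.surjInv_eq _ _

/-- moving `f` across casts along the lift sequence -/
lemma liftSeq_cast (f : ∀ j : ℤ, A (j + 1) →ₗ[F] A j) (N : ℤ)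
    (hsurj : ∀ i, N ≤ i → Function.Surjective (f i)) (a : A N)
    (k k' : ℕ) (hk' : k' = k + 1) {j : ℤ} (hk : (liftSeq f N hsurj a k).1 = j)
    (p1 : A ((liftSeq f N hsurj a k').1) = A (j + 1))
    (p2 : A ((liftSeq f N hsurj a k).1) = A j) :
    f j (cast p1 (liftSeq f N hsurj a k').2.2)
      = cast p2 (liftSeq f N hsurj a k).2.2 := by
  subst hk' hk
  have e1 : cast p1 (liftSeq f N hsurj a (k + 1)).2.2
      = (liftSeq f N hsurj a (k + 1)).2.2 := eq_of_heq (cast_heq _ _)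
  have e2 : cast p2 (liftSeq f N hsurj a k).2.2
      = (liftSeq f N hsurj a k).2.2 := eq_of_heq (cast_heq _ _)
  rw [e1, e2]
  exact liftSeq_spec f N hsurj a k

lemma liftSeq_cast0 (f : ∀ j : ℤ, A (j + 1) →ₗ[F] A j) (N : ℤ)
    (hsurj : ∀ i, N ≤ i → Function.Surjective (f i)) (a : A N)
    (k' : ℕ) (hk' : k' = 1)
    (p1 : A ((liftSeq f N hsurj a k').1) = A (N + 1)) :
    f N (cast p1 (liftSeq f N hsurj a k').2.2) = a := by
  subst hk'
  have e1 : cast p1 (liftSeq f N hsurj a 1).2.2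
      = (liftSeq f N hsurj a 1).2.2 := eq_of_heq (cast_heq _ _)
  rw [e1]
  exact liftSeq_spec f N hsurj a 0

end Lift

/-- If `M + 1 ≤ N`, the maps `f i` are surjective for all `i ≥ N`
and injective for all `j ≤ M`, then `κ = L/K` is isomorphic to the image of the
composite `F_{M+1,N} : A N → A (M+1)` (and to `A N` itself when `M + 1 = N`). -/
theorem statement7 (F : Type*) [Field F] (A : ℤ → Type*) [∀ j, AddCommGroup (A j)]
    [∀ j, Module F (A j)]
    (f : ∀ j : ℤ, A (j + 1) →ₗ[F] A j)
    (Fc : ∀ j i : ℤ, j ≤ i → (A i →ₗ[F] A j))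
    (hFid : ∀ j : ℤ, Fc j j le_rfl = LinearMap.id)
    (hFsucc : ∀ (j i : ℤ) (h : j ≤ i),
      Fc j (i + 1) (h.trans (by omega)) = (Fc j i h).comp (f i))
    (M N : ℤ) (hMN : M + 1 ≤ N)
    (hsurj : ∀ i, N ≤ i → Function.Surjective (f i))
    (hinj : ∀ j ≤ M, Function.Injective (f j)) :
    Nonempty ((↥(invLim F A f) ⧸ vanishSub F A f) ≃ₗ[F]
        ↥(LinearMap.range (Fc (M + 1) N hMN))) ∧
      (M + 1 = N →
        Nonempty ((↥(invLim F A f) ⧸ vanishSub F A f) ≃ₗ[F] A N)) := by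
  classical
  set φ₀ : invLim F A f →ₗ[F] A (M + 1) := invLimProj F A f (M + 1) with hφ₀
  have hmem : ∀ x : invLim F A f, φ₀ x ∈ LinearMap.range (Fc (M + 1) N hMN) :=
    fun x => ⟨x.1 N, Fc_apply f Fc hFid hFsucc x.1 x.2 (M + 1) N hMN⟩
  set φ : invLim F A f →ₗ[F] LinearMap.range (Fc (M + 1) N hMN) :=
    φ₀.codRestrict _ hmem with hφ
  -- surjectivity of φ
  have hφsurj : Function.Surjective φ := by
    rintro ⟨y, hy⟩
    obtain ⟨a, rfl⟩ := hy
    refine ⟨⟨fun j => if h : j ≤ N then Fc j N h a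
        else cast (congrArg A (show (liftSeq f N hsurj a (j - N).toNat).1 = j by
          rw [liftSeq_fst]; omega)) (liftSeq f N hsurj a (j - N).toNat).2.2, ?_⟩, ?_⟩
    · -- membership in invLim
      intro j
      beta_reduce
      by_cases h1 : j + 1 ≤ N
      · have h0 : j ≤ N := by omega
        rw [dif_pos h1, dif_pos h0]
        exact (DFunLike.congr_fun (Fc_top f Fc hFid hFsucc j N h1 h0) a).symm
      · by_cases h0 : j ≤ N
        · have hjN : j = N := by omega
          subst hjN
          rw [dif_neg h1, dif_pos h0]
          have hFa : Fc j j h0 a = a := DFunLike.congr_fun (hFid j) a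
          rw [hFa]
          exact liftSeq_cast0 f j hsurj a _ (by omega) _
        · rw [dif_neg h1, dif_neg h0]
          exact liftSeq_cast f N hsurj a (j - N).toNat (j + 1 - N).toNat (by omega)
            (by rw [liftSeq_fst]; omega) _ _
    · apply Subtype.ext
      show (if h : M + 1 ≤ N then Fc (M + 1) N h a else _) = Fc (M + 1) N hMN a
      rw [dif_pos hMN]
  -- kernel of φ
  have hker : LinearMap.ker φ = vanishSub F A f := by
    ext x
    rw [hφ, LinearMap.ker_codRestrict]
    constructor
    · intro hx
      have hx' : x.1 (M + 1) = 0 := hx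
      refine ⟨M + 1, fun j hj => ?_⟩
      rw [← Fc_apply f Fc hFid hFsucc x.1 x.2 j (M + 1) hj, hx', map_zero]
    · rintro ⟨N₀, hN₀⟩
      show x.1 (M + 1) = 0
      have hj0 : min N₀ (M + 1) ≤ M + 1 := min_le_right _ _
      apply Fc_inj f Fc hFid hFsucc M hinj _ _ hj0 le_rfl
      rw [Fc_apply f Fc hFid hFsucc x.1 x.2 _ _ hj0, map_zero,
        hN₀ _ (min_le_left _ _)]
  have e1 : (↥(invLim F A f) ⧸ vanishSub F A f) ≃ₗ[F]
      ↥(LinearMap.range (Fc (M + 1) N hMN)) :=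
    (Submodule.quotEquivOfEq _ _ hker.symm).trans (φ.quotKerEquivOfSurjective hφsurj)
  refine ⟨⟨e1⟩, fun h => ?_⟩
  subst h
  have hr : LinearMap.range (Fc (M + 1) (M + 1) hMN) = ⊤ := by
    have : Fc (M + 1) (M + 1) hMN = LinearMap.id := hFid (M + 1)
    rw [this, LinearMap.range_id]
  exact ⟨e1.trans ((LinearEquiv.ofEq _ _ hr).trans Submodule.topEquiv)⟩
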